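/- The Brzozowski reordering derivative decides membership in the trace closure: for every regular expression E over Σ and all words u, v, u++v ∈ [⟦E⟧] if and only if v ∈ [⟦D_u E⟧]; in particular, u ∈ [⟦E⟧] if and only if (D_u E)↓. -/

import Mathlib

open RegularExpression
open scoped Classical

universe u

variable {α : Type u}

/-- Two words are independent if every letter of the first is independent
of every letter of the second. -/
def WIndep (I : α → α → Prop) (u v : List α) : Prop :=
  ∀ a ∈ u, ∀ b ∈ v, I a b

/-- Trace equivalence: the least equivalence relation on words containing
all pairs (x ++ [a,b] ++ y, x ++ [b,a] ++ y) with a I b. -/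
inductive TrEq (I : α → α → Prop) : List α → List α → Prop
  | swap (x y : List α) {a b : α} : I a b → TrEq I (x ++ [a, b] ++ y) (x ++ [b, a] ++ y)
  | refl (u : List α) : TrEq I u u
  | symm {u v : List α} : TrEq I u v → TrEq I v u
  | trans {u v w : List α} : TrEq I u v → TrEq I v w → TrEq I u w

/-- Trace closure of a language. -/
def TrClosure (I : α → α → Prop) (L : Set (List α)) : Set (List α) :=
  {w | ∃ z ∈ L, TrEq I w z}

/-- u ⊲ z ⊳ v with exactly n blocks of u: there are nonempty words u₁,…,uₙ and
words v₀,…,vₙ (with v₁,…,v_{n-1} nonempty) such that u = u₁⋯uₙ, v = v₀⋯vₙ,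
z = v₀u₁v₁⋯uₙvₙ and vⱼ I uᵢ whenever j < i. -/
def ScatN (I : α → α → Prop) (n : ℕ) (u z v : List α) : Prop :=
  ∃ us vs : ℕ → List α,
    (∀ i, 1 ≤ i → i ≤ n → us i ≠ []) ∧
    (∀ j, 1 ≤ j → j ≤ n - 1 → vs j ≠ []) ∧
    u = ((List.range n).map (fun i => us (i + 1))).flatten ∧
    v = ((List.range (n + 1)).map vs).flatten ∧
    z = vs 0 ++ ((List.range n).map (fun i => us (i + 1) ++ vs (i + 1))).flatten ∧
    (∀ i j, 1 ≤ i → i ≤ n → j < i → WIndep I (vs j) (us i))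

/-- u ⊲ z ⊳ v -/
def Scat (I : α → α → Prop) (u z v : List α) : Prop :=
  ∃ n, ScatN I n u z v

/-- u ∼⊲ z ⊳ v -/
def EqScat (I : α → α → Prop) (u z v : List α) : Prop :=
  ∃ u', TrEq I u u' ∧ Scat I u' z v

/-- u ∼⊲ z ⊳∼ v -/
def EqScatEq (I : α → α → Prop) (u z v : List α) : Prop :=
  ∃ u' v', TrEq I u u' ∧ Scat I u' z v' ∧ TrEq I v' v

/-- u ∼⊲_N z ⊳∼ v : as EqScatEq, with the number of blocks bounded by N -/
def EqScatEqLe (I : α → α → Prop) (N : ℕ) (u z v : List α) : Prop :=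
  ∃ u' v', TrEq I u u' ∧ (∃ n ≤ N, ScatN I n u' z v') ∧ TrEq I v' v

/-- Reordering concatenation of words. -/
def rconc (I : α → α → Prop) : List α → List α → Set (List α)
  | [], v => {v}
  | a :: u, [] => {a :: u}
  | a :: u, b :: v =>
      (List.cons a) '' rconc I u (b :: v) ∪
      {z | WIndep I (a :: u) [b] ∧ ∃ w ∈ rconc I (a :: u) v, z = b :: w}
termination_by u v => u.length + v.length

/-- Reordering concatenation lifted to languages. -/
def rconcL (I : α → α → Prop) (L L' : Set (List α)) : Set (List α) :=
  {z | ∃ u ∈ L, ∃ v ∈ L', z ∈ rconc I u v}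

/-- The reorderable part of a language w.r.t. a word. -/
def RPart (I : α → α → Prop) (u : List α) (L : Set (List α)) : Set (List α) :=
  {v ∈ L | WIndep I v u}

/-- The reordering derivative of a language along a word. -/
def RDeriv (I : α → α → Prop) (u : List α) (L : Set (List α)) : Set (List α) :=
  {v | ∃ z ∈ L, EqScat I u z v}

/-- Syntactic reorderable part of a regexp w.r.t. a letter. -/
noncomputable def Rexp (I : α → α → Prop) (a : α) : RegularExpression α → RegularExpression α
  | zero => zero
  | epsilon => epsilon
  | char b => if I a b then char b else zero
  | plus E F => plus (Rexp I a E) (Rexp I a F)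
  | comp E F => comp (Rexp I a E) (Rexp I a F)
  | RegularExpression.star E => star (Rexp I a E)

/-- Brzozowski reordering derivative of a regexp along a letter. -/
noncomputable def Dexp (I : α → α → Prop) (a : α) : RegularExpression α → RegularExpression α
  | zero => zero
  | epsilon => zero
  | char b => if a = b then epsilon else zero
  | plus E F => plus (Dexp I a E) (Dexp I a F)
  | comp E F => plus (comp (Dexp I a E) F) (comp (Rexp I a E) (Dexp I a F))
  | RegularExpression.star E => comp (star (Rexp I a E)) (comp (Dexp I a E) (star E))

/-- Syntactic reorderable part along a word. -/
noncomputable def RexpW (I : α → α → Prop) (u : List α) (E : RegularExpression α) :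
    RegularExpression α :=
  u.foldl (fun E a => Rexp I a E) E

/-- Brzozowski reordering derivative along a word. -/
noncomputable def DexpW (I : α → α → Prop) (u : List α) (E : RegularExpression α) :
    RegularExpression α :=
  u.foldl (fun E a => Dexp I a E) E

/-- Antimirov reordering parts-of-derivatives along a letter. -/
inductive Antim (I : α → α → Prop) : RegularExpression α → α → RegularExpression α → Prop
  | chr (a : α) : Antim I (char a) a epsilon
  | plusL {E F : RegularExpression α} {a E'} : Antim I E a E' → Antim I (plus E F) a E'
  | plusR {E F : RegularExpression α} {a F'} : Antim I F a F' → Antim I (plus E F) a F'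
  | compL {E F : RegularExpression α} {a E'} : Antim I E a E' → Antim I (comp E F) a (comp E' F)
  | compR {E F : RegularExpression α} {a F'} :
      Antim I F a F' → Antim I (comp E F) a (comp (Rexp I a E) F')
  | st {E : RegularExpression α} {a E'} :
      Antim I E a E' → Antim I (star E) a (comp (star (Rexp I a E)) (comp E' (star E)))

/-- Antimirov reordering parts-of-derivatives along a word. -/
inductive AntimW (I : α → α → Prop) : RegularExpression α → List α → RegularExpression α → Prop
  | nil (E : RegularExpression α) : AntimW I E [] E
  | snoc {E : RegularExpression α} {u E' a E''} :
      AntimW I E u E' → Antim I E' a E'' → AntimW I E (u ++ [a]) E''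

/-- The dependence graph of a word: vertices are positions; distinct positions
are adjacent when their letters are not independent. -/
def depGraph (I : α → α → Prop) (w : List α) : SimpleGraph (Fin w.length) where
  Adj i j := i ≠ j ∧ ¬(I (w.get i) (w.get j) ∧ I (w.get j) (w.get i))
  symm := by
    constructor
    intro i j h
    exact ⟨h.1.symm, fun hc => h.2 ⟨hc.2, hc.1⟩⟩
  loopless := by
    constructor
    intro i h
    exact h.1 rfl

/-- A word is connected if its dependence graph is connected. -/
def WordConnected (I : α → α → Prop) (w : List α) : Prop :=
  (depGraph I w).Preconnected

/-- Least fixed point star for the trace-closing semantics. -/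
def starI (I : α → α → Prop) (L : Set (List α)) : Set (List α) :=
  sInf {X | {([] : List α)} ∪ rconcL I L X ⊆ X}

/-- Trace-closing semantics of regular expressions. -/
def langI (I : α → α → Prop) : RegularExpression α → Set (List α)
  | zero => ∅
  | epsilon => {[]}
  | char a => {[a]}
  | plus E F => langI I E ∪ langI I F
  | comp E F => rconcL I (langI I E) (langI I F)
  | RegularExpression.star E => starI I (langI I E)

/-- L has (scattering) rank at most N. -/
def HasRankLe (I : α → α → Prop) (L : Set (List α)) (N : ℕ) : Prop :=
  ∀ u v, u ++ v ∈ TrClosure I L → ∃ z ∈ L, EqScatEqLe I N u z v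

/-- L has uniform (scattering) rank at most N. -/
def HasUniformRankLe (I : α → α → Prop) (L : Set (List α)) (N : ℕ) : Prop :=
  ∀ w ∈ TrClosure I L, ∃ z ∈ L, ∀ u v, w = u ++ v → EqScatEqLe I N u z v

/-- Star-connected regular expressions. -/
inductive StarConnected (I : α → α → Prop) : RegularExpression α → Prop
  | zero : StarConnected I zero
  | epsilon : StarConnected I epsilon
  | chr (a : α) : StarConnected I (char a)
  | plus {E F : RegularExpression α} :
      StarConnected I E → StarConnected I F → StarConnected I (plus E F)
  | comp {E F : RegularExpression α} :
      StarConnected I E → StarConnected I F → StarConnected I (comp E F)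
  | st {E : RegularExpression α} :
      StarConnected I E → (∀ w ∈ E.matches', WordConnected I w) → StarConnected I (star E)

/-- Refined Antimirov reordering parts-of-derivatives along a letter. -/
inductive RAntim (I : α → α → Prop) :
    RegularExpression α → α → RegularExpression α → RegularExpression α → Prop
  | chr (a : α) : RAntim I (char a) a epsilon epsilon
  | plusL {E F : RegularExpression α} {a El Er} :
      RAntim I E a El Er → RAntim I (plus E F) a El Er
  | plusR {E F : RegularExpression α} {a Fl Fr} :
      RAntim I F a Fl Fr → RAntim I (plus E F) a Fl Fr
  | compL {E F : RegularExpression α} {a El Er} :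
      RAntim I E a El Er → RAntim I (comp E F) a El (comp Er F)
  | compR {E F : RegularExpression α} {a Fl Fr} :
      RAntim I F a Fl Fr → RAntim I (comp E F) a (comp (Rexp I a E) Fl) Fr
  | st {E : RegularExpression α} {a El Er} :
      RAntim I E a El Er →
      RAntim I (star E) a (comp (star (Rexp I a E)) El) (comp Er (star E))

/-- Refined Antimirov relation lifted to nonempty lists of regexps (unbounded). -/
inductive RAntimL (I : α → α → Prop) :
    List (RegularExpression α) → α → List (RegularExpression α) → Prop
  | split {Γ Δ : List (RegularExpression α)} {E : RegularExpression α} {a El Er} :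
      RAntim I E a El Er →
      RAntimL I (Γ ++ E :: Δ) a (Γ.map (Rexp I a) ++ El :: Er :: Δ)
  | dropL {Γ Δ : List (RegularExpression α)} {E : RegularExpression α} {a El Er} :
      RAntim I E a El Er → [] ∈ El.matches' → Γ ≠ [] →
      RAntimL I (Γ ++ E :: Δ) a (Γ.map (Rexp I a) ++ Er :: Δ)
  | dropR {Γ Δ : List (RegularExpression α)} {E : RegularExpression α} {a El Er} :
      RAntim I E a El Er → [] ∈ Er.matches' → Δ ≠ [] →
      RAntimL I (Γ ++ E :: Δ) a (Γ.map (Rexp I a) ++ El :: Δ)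
  | dropBoth {Γ Δ : List (RegularExpression α)} {E : RegularExpression α} {a El Er} :
      RAntim I E a El Er → [] ∈ El.matches' → [] ∈ Er.matches' → Γ ≠ [] → Δ ≠ [] →
      RAntimL I (Γ ++ E :: Δ) a (Γ.map (Rexp I a) ++ Δ)

/-- Refined Antimirov relation along a word (unbounded). -/
inductive RAntimW (I : α → α → Prop) :
    RegularExpression α → List α → List (RegularExpression α) → Prop
  | nil (E : RegularExpression α) : RAntimW I E [] [E]
  | snoc {E : RegularExpression α} {u Γ a Γ'} :
      RAntimW I E u Γ → RAntimL I Γ a Γ' → RAntimW I E (u ++ [a]) Γ'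

/-- N-bounded refined Antimirov relation lifted to nonempty lists of regexps. -/
inductive RAntimLN (I : α → α → Prop) (N : ℕ) :
    List (RegularExpression α) → α → List (RegularExpression α) → Prop
  | split {Γ Δ : List (RegularExpression α)} {E : RegularExpression α} {a El Er} :
      RAntim I E a El Er → Γ.length + Δ.length < N →
      RAntimLN I N (Γ ++ E :: Δ) a (Γ.map (Rexp I a) ++ El :: Er :: Δ)
  | dropL {Γ Δ : List (RegularExpression α)} {E : RegularExpression α} {a El Er} :
      RAntim I E a El Er → [] ∈ El.matches' → Γ ≠ [] →
      RAntimLN I N (Γ ++ E :: Δ) a (Γ.map (Rexp I a) ++ Er :: Δ)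
  | dropR {Γ Δ : List (RegularExpression α)} {E : RegularExpression α} {a El Er} :
      RAntim I E a El Er → [] ∈ Er.matches' → Δ ≠ [] →
      RAntimLN I N (Γ ++ E :: Δ) a (Γ.map (Rexp I a) ++ El :: Δ)
  | dropBoth {Γ Δ : List (RegularExpression α)} {E : RegularExpression α} {a El Er} :
      RAntim I E a El Er → [] ∈ El.matches' → [] ∈ Er.matches' → Γ ≠ [] → Δ ≠ [] →
      RAntimLN I N (Γ ++ E :: Δ) a (Γ.map (Rexp I a) ++ Δ)

/-- N-bounded refined Antimirov relation along a word. -/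
inductive RAntimWN (I : α → α → Prop) (N : ℕ) :
    RegularExpression α → List α → List (RegularExpression α) → Prop
  | nil (E : RegularExpression α) : RAntimWN I N E [] [E]
  | snoc {E : RegularExpression α} {u Γ a Γ'} :
      RAntimWN I N E u Γ → RAntimLN I N Γ a Γ' → RAntimWN I N E (u ++ [a]) Γ'

section Helpers
variable {I : α → α → Prop}

lemma treq_append_left (x : List α) {u v : List α} (h : TrEq I u v) :
    TrEq I (x ++ u) (x ++ v) := by
  induction h with
  | swap x' y' hI =>
      have := TrEq.swap (I := I) (x ++ x') y' hI
      simpa [List.append_assoc] using this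
  | refl u => exact TrEq.refl _
  | symm _ ih => exact ih.symm
  | trans _ _ ih1 ih2 => exact ih1.trans ih2

lemma treq_append_right (y : List α) {u v : List α} (h : TrEq I u v) :
    TrEq I (u ++ y) (v ++ y) := by
  induction h with
  | swap x' y' hI =>
      have := TrEq.swap (I := I) x' (y' ++ y) hI
      simpa [List.append_assoc] using this
  | refl u => exact TrEq.refl _
  | symm _ ih => exact ih.symm
  | trans _ _ ih1 ih2 => exact ih1.trans ih2

lemma treq_cons (a : α) {u v : List α} (h : TrEq I u v) : TrEq I (a :: u) (a :: v) :=
  treq_append_left [a] h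

lemma treq_length {u v : List α} (h : TrEq I u v) : u.length = v.length := by
  induction h with
  | swap x y hI => simp
  | refl u => rfl
  | symm _ ih => omega
  | trans _ _ ih1 ih2 => omega

lemma treq_nil {z : List α} (h : TrEq I [] z) : z = [] := by
  have := treq_length h; simpa [List.length_eq_zero_iff] using this.symm

lemma treq_commute (hsym : Symmetric I) {p : List α} {a : α} (w : List α)
    (hp : ∀ b ∈ p, I b a) : TrEq I (a :: (p ++ w)) (p ++ a :: w) := by
  induction p with
  | nil => exact TrEq.refl _
  | cons b p ih =>
      have h1 : TrEq I (a :: b :: (p ++ w)) (b :: a :: (p ++ w)) := by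
        have := TrEq.swap (I := I) [] (p ++ w) (hsym (hp b (by simp)))
        simpa using this
      exact h1.trans (treq_cons b (ih (fun c hc => hp c (by simp [hc]))))

end Helpers
section Extract
variable {I : α → α → Prop}

/-- Forward extraction property. -/
def Qa (I : α → α → Prop) (a : α) (y z : List α) : Prop :=
  ∀ y₀ y₁, y = y₀ ++ a :: y₁ → (∀ b ∈ y₀, I b a) →
    ∃ z₀ z₁, z = z₀ ++ a :: z₁ ∧ (∀ b ∈ z₀, I b a) ∧ TrEq I (y₀ ++ y₁) (z₀ ++ z₁)

lemma qa_swap (hsym : Symmetric I) (x y' : List α) {c d : α} (hcd : I c d) (a : α) :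
    Qa I a (x ++ [c, d] ++ y') (x ++ [d, c] ++ y') := by
  intro y₀ y₁ heq hind
  have heq' : x ++ (c :: d :: y') = y₀ ++ (a :: y₁) := by simpa [List.append_assoc] using heq
  rcases List.append_eq_append_iff.1 heq' with ⟨r, hr1, hr2⟩ | ⟨r, hr1, hr2⟩
  · -- y₀ = x ++ r, c::d::y' = r ++ a::y₁
    rcases r with _ | ⟨r1, _ | ⟨r2, r'⟩⟩
    · -- r = []
      rw [List.nil_append] at hr2
      injection hr2 with h1 h2
      simp only [List.append_nil] at hr1
      refine ⟨y₀ ++ [d], y', by simp [hr1, h1, List.append_assoc], ?_, ?_⟩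
      · intro b hb
        rcases List.mem_append.1 hb with hb | hb
        · exact hind b hb
        · simp only [List.mem_singleton] at hb
          rw [hb, ← h1]; exact hsym hcd
      · have e : y₀ ++ y₁ = (y₀ ++ [d]) ++ y' := by simp [← h2, List.append_assoc]
        rw [e]; exact TrEq.refl _
    · -- r = [r1]
      rw [List.cons_append, List.nil_append] at hr2
      injection hr2 with h1 h2
      injection h2 with h2 h3
      refine ⟨x, c :: y', by simp [h2, List.append_assoc], ?_, ?_⟩
      · intro b hb
        exact hind b (by rw [hr1]; exact List.mem_append.2 (Or.inl hb))
      · have e : y₀ ++ y₁ = x ++ (c :: y') := by simp [hr1, ← h1, ← h3, List.append_assoc]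
        rw [e]; exact TrEq.refl _
    · -- r = r1 :: r2 :: r'
      rw [List.cons_append, List.cons_append] at hr2
      injection hr2 with h1 h2
      injection h2 with h2 h3
      refine ⟨x ++ [d, c] ++ r', y₁, by simp [h3, List.append_assoc], ?_, ?_⟩
      · intro b hb
        apply hind b
        rw [hr1, ← h1, ← h2]
        simp only [List.append_assoc, List.mem_append, List.mem_cons,
          List.mem_singleton] at hb ⊢
        tauto
      · have e1 : y₀ ++ y₁ = x ++ [c, d] ++ (r' ++ y₁) := by
          simp [hr1, ← h1, ← h2, List.append_assoc]
        have e2 : (x ++ [d, c] ++ r') ++ y₁ = x ++ [d, c] ++ (r' ++ y₁) := by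
          simp [List.append_assoc]
        rw [e1, e2]; exact TrEq.swap _ _ hcd
  · -- x = y₀ ++ r, a::y₁ = r ++ c::d::y'
    rcases r with _ | ⟨r1, r'⟩
    · -- r = []
      rw [List.nil_append] at hr2
      injection hr2 with h1 h2
      simp only [List.append_nil] at hr1
      refine ⟨y₀ ++ [d], y', by simp [hr1, ← h1, List.append_assoc], ?_, ?_⟩
      · intro b hb
        rcases List.mem_append.1 hb with hb | hb
        · exact hind b hb
        · simp only [List.mem_singleton] at hb
          rw [hb, h1]; exact hsym hcd
      · have e : y₀ ++ y₁ = (y₀ ++ [d]) ++ y' := by simp [h2, List.append_assoc]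
        rw [e]; exact TrEq.refl _
    · -- r = r1 :: r'
      rw [List.cons_append] at hr2
      injection hr2 with h1 h2
      refine ⟨y₀, r' ++ [d, c] ++ y', by simp [hr1, h1, List.append_assoc], hind, ?_⟩
      have e1 : y₀ ++ y₁ = (y₀ ++ r') ++ [c, d] ++ y' := by simp [h2, List.append_assoc]
      have e2 : y₀ ++ (r' ++ [d, c] ++ y') = (y₀ ++ r') ++ [d, c] ++ y' := by
        simp [List.append_assoc]
      rw [e1, e2]; exact TrEq.swap _ _ hcd

lemma treq_extract (hsym : Symmetric I) {y z : List α} (h : TrEq I y z) (a : α) :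
    Qa I a y z := by
  have main : ∀ {y z : List α}, TrEq I y z → Qa I a y z ∧ Qa I a z y := by
    intro y z h
    induction h with
    | swap x y' hI => exact ⟨qa_swap hsym x y' hI a, qa_swap hsym x y' (hsym hI) a⟩
    | refl u =>
        constructor <;>
          exact fun y₀ y₁ heq hind => ⟨y₀, y₁, heq, hind, TrEq.refl _⟩
    | symm _ ih => exact ⟨ih.2, ih.1⟩
    | trans _ _ ih1 ih2 =>
        constructor
        · intro y₀ y₁ heq hind
          obtain ⟨m₀, m₁, hm, hmind, hmt⟩ := ih1.1 y₀ y₁ heq hind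
          obtain ⟨z₀, z₁, hz, hzind, hzt⟩ := ih2.1 m₀ m₁ hm hmind
          exact ⟨z₀, z₁, hz, hzind, hmt.trans hzt⟩
        · intro y₀ y₁ heq hind
          obtain ⟨m₀, m₁, hm, hmind, hmt⟩ := ih2.2 y₀ y₁ heq hind
          obtain ⟨z₀, z₁, hz, hzind, hzt⟩ := ih1.2 m₀ m₁ hm hmind
          exact ⟨z₀, z₁, hz, hzind, hmt.trans hzt⟩
  exact (main h).1

end Extract
section Semantics
variable {I : α → α → Prop}

lemma matches'_zeroC : (zero : RegularExpression α).matches' = 0 := rfl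
lemma matches'_epsilonC : (epsilon : RegularExpression α).matches' = 1 := rfl
lemma matches'_plusC (P Q : RegularExpression α) :
    (plus P Q).matches' = P.matches' + Q.matches' := rfl
lemma matches'_compC (P Q : RegularExpression α) :
    (comp P Q).matches' = P.matches' * Q.matches' := rfl

lemma rexp_matches (a : α) (E : RegularExpression α) (v : List α) :
    v ∈ (Rexp I a E).matches' ↔ v ∈ E.matches' ∧ ∀ b ∈ v, I a b := by
  induction E generalizing v with
  | zero => simp [Rexp, matches'_zeroC]
  | epsilon =>
      simp only [Rexp, matches'_epsilonC, Language.mem_one]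
      constructor
      · rintro rfl; simp
      · rintro ⟨rfl, -⟩; rfl
  | char c =>
      by_cases h : I a c
      · simp only [Rexp, h, if_true, matches'_char, Set.mem_singleton_iff]
        constructor
        · rintro rfl; exact ⟨rfl, by simpa using h⟩
        · rintro ⟨rfl, -⟩; rfl
      · simp only [Rexp, h, if_false, matches'_zeroC, Language.notMem_zero, false_iff,
          matches'_char, Set.mem_singleton_iff, not_and]
        rintro rfl hv
        exact h (by simpa using hv)
  | plus E F ihE ihF =>
      simp only [Rexp, matches'_plusC, Language.mem_add, ihE, ihF]
      tauto
  | comp E F ihE ihF =>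
      simp only [Rexp, matches'_compC, Language.mem_mul, ihE, ihF]
      constructor
      · rintro ⟨p, ⟨hp, hpi⟩, q, ⟨hq, hqi⟩, rfl⟩
        refine ⟨⟨p, hp, q, hq, rfl⟩, ?_⟩
        intro b hb; rcases List.mem_append.1 hb with hb | hb
        exacts [hpi b hb, hqi b hb]
      · rintro ⟨⟨p, hp, q, hq, rfl⟩, hind⟩
        exact ⟨p, ⟨hp, fun b hb => hind b (List.mem_append.2 (Or.inl hb))⟩,
          q, ⟨hq, fun b hb => hind b (List.mem_append.2 (Or.inr hb))⟩, rfl⟩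
  | star E ihE =>
      simp only [Rexp, matches'_star, Language.mem_kstar]
      constructor
      · rintro ⟨L, rfl, hL⟩
        refine ⟨⟨L, rfl, fun y hy => ((ihE _).1 (hL y hy)).1⟩, ?_⟩
        intro b hb
        obtain ⟨l, hl, hbl⟩ := List.mem_flatten.1 hb
        exact ((ihE _).1 (hL l hl)).2 b hbl
      · rintro ⟨⟨L, rfl, hL⟩, hind⟩
        refine ⟨L, rfl, fun y hy => (ihE y).2 ⟨hL y hy, ?_⟩⟩
        intro b hb
        exact hind b (List.mem_flatten.2 ⟨y, hy, hb⟩)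

lemma dexp_matches (a : α) (E : RegularExpression α) (v : List α) :
    v ∈ (Dexp I a E).matches' ↔
      ∃ v₀ v₁, v = v₀ ++ v₁ ∧ v₀ ++ a :: v₁ ∈ E.matches' ∧ ∀ b ∈ v₀, I a b := by
  induction E generalizing v with
  | zero => simp [Dexp, matches'_zeroC]
  | epsilon =>
      simp only [Dexp, matches'_zeroC, Language.notMem_zero, false_iff, matches'_epsilonC,
        Language.mem_one, not_exists]
      rintro v₀ v₁ ⟨rfl, h, -⟩
      simp at h
  | char c =>
      by_cases h : a = c
      · subst h
        simp only [Dexp, if_true, matches'_epsilonC, Language.mem_one, matches'_char,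
          Set.mem_singleton_iff]
        constructor
        · rintro rfl; exact ⟨[], [], rfl, rfl, by simp⟩
        · rintro ⟨v₀, v₁, rfl, h, -⟩
          replace h : v₀ ++ a :: v₁ = [a] := h
          rcases v₀ with _ | ⟨b, v₀⟩
          · simp only [List.nil_append, List.cons.injEq] at h
            simp [h.2]
          · exfalso
            have := congrArg List.length h; simp at this
      · simp only [Dexp, h, if_false, matches'_zeroC, Language.notMem_zero, false_iff,
          matches'_char, not_exists]
        rintro v₀ v₁ ⟨rfl, hm, -⟩
        replace hm : v₀ ++ a :: v₁ = [c] := hm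
        rcases v₀ with _ | ⟨b, v₀⟩
        · simp only [List.nil_append, List.cons.injEq] at hm
          exact h hm.1
        · have := congrArg List.length hm; simp at this
  | plus E F ihE ihF =>
      simp only [Dexp, matches'_plusC, Language.mem_add, ihE, ihF]
      constructor
      · rintro (⟨v₀, v₁, rfl, hm, hi⟩ | ⟨v₀, v₁, rfl, hm, hi⟩)
        exacts [⟨v₀, v₁, rfl, Or.inl hm, hi⟩, ⟨v₀, v₁, rfl, Or.inr hm, hi⟩]
      · rintro ⟨v₀, v₁, rfl, hm | hm, hi⟩
        exacts [Or.inl ⟨v₀, v₁, rfl, hm, hi⟩, Or.inr ⟨v₀, v₁, rfl, hm, hi⟩]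
  | comp E F ihE ihF =>
      simp only [Dexp, matches'_plusC, matches'_compC, Language.mem_add, Language.mem_mul]
      constructor
      · rintro (⟨p, hp, q, hq, rfl⟩ | ⟨p, hp, q, hq, rfl⟩)
        · obtain ⟨p₀, p₁, rfl, hm, hi⟩ := (ihE p).1 hp
          exact ⟨p₀, p₁ ++ q, by simp [List.append_assoc],
            ⟨p₀ ++ a :: p₁, hm, q, hq, by simp [List.append_assoc]⟩, hi⟩
        · obtain ⟨hp', hpi⟩ := (rexp_matches a E p).1 hp
          obtain ⟨q₀, q₁, rfl, hm, hi⟩ := (ihF q).1 hq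
          refine ⟨p ++ q₀, q₁, by simp [List.append_assoc],
            ⟨p, hp', q₀ ++ a :: q₁, hm, by simp [List.append_assoc]⟩, ?_⟩
          intro b hb; rcases List.mem_append.1 hb with hb | hb
          exacts [hpi b hb, hi b hb]
      · rintro ⟨v₀, v₁, rfl, ⟨s, hs, t, ht, hst⟩, hi⟩
        have hst' : s ++ t = v₀ ++ a :: v₁ := hst
        rcases List.append_eq_append_iff.1 hst' with ⟨r, hr1, hr2⟩ | ⟨r, hr1, hr2⟩
        · -- v₀ = s ++ r, t = r ++ a :: v₁
          right
          refine ⟨s, (rexp_matches a E s).2 ⟨hs, fun b hb =>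
              hi b (by rw [hr1]; exact List.mem_append.2 (Or.inl hb))⟩,
            r ++ v₁, (ihF _).2 ⟨r, v₁, rfl, hr2 ▸ ht, fun b hb =>
              hi b (by rw [hr1]; exact List.mem_append.2 (Or.inr hb))⟩,
            by rw [hr1, List.append_assoc]⟩
        · -- s = v₀ ++ r, a :: v₁ = r ++ t
          rcases r with _ | ⟨r1, r'⟩
          · right
            rw [List.nil_append] at hr2
            simp only [List.append_nil] at hr1
            exact ⟨v₀, (rexp_matches a E v₀).2 ⟨hr1 ▸ hs, hi⟩, v₁,
              (ihF v₁).2 ⟨[], v₁, rfl, by rw [List.nil_append, hr2]; exact ht, by simp⟩, rfl⟩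
          · rw [List.cons_append] at hr2
            injection hr2 with h1 h2
            left
            refine ⟨v₀ ++ r', (ihE _).2 ⟨v₀, r', rfl, by rw [h1, ← hr1]; exact hs, hi⟩,
              t, ht, by rw [h2, List.append_assoc]⟩
  | star E ihE =>
      simp only [Dexp, matches'_compC, Language.mem_mul, matches'_star]
      constructor
      · rintro ⟨p, hp, w, ⟨q, hq, r, hr, rfl⟩, rfl⟩
        have hp' : p ∈ (Rexp I a (RegularExpression.star E)).matches' := hp
        obtain ⟨hps, hpi⟩ := (rexp_matches a (RegularExpression.star E) p).1 hp'
        obtain ⟨L, rfl, hL⟩ := Language.mem_kstar.1 (by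
          simpa [matches'_star] using hps)
        obtain ⟨q₀, q₁, rfl, hm, hqi⟩ := (ihE q).1 hq
        obtain ⟨M, rfl, hM⟩ := Language.mem_kstar.1 hr
        refine ⟨L.flatten ++ q₀, q₁ ++ M.flatten, by simp [List.append_assoc], ?_, ?_⟩
        · apply Language.mem_kstar.2
          refine ⟨L ++ [q₀ ++ a :: q₁] ++ M, by simp [List.append_assoc], ?_⟩
          intro y hy
          simp only [List.mem_append, List.mem_singleton] at hy
          rcases hy with (hy | rfl) | hy
          exacts [hL y hy, hm, hM y hy]
        · intro b hb; rcases List.mem_append.1 hb with hb | hb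
          · exact hpi b (by simpa using hb)
          · exact hqi b hb
      · rintro ⟨v₀, v₁, rfl, hm, hi⟩
        obtain ⟨L, hflat, hL⟩ := Language.mem_kstar.1 hm
        clear hm
        suffices h : ∀ (L : List (List α)) (v₀ v₁ : List α),
            v₀ ++ a :: v₁ = L.flatten → (∀ y ∈ L, y ∈ E.matches') → (∀ b ∈ v₀, I a b) →
            ∃ p ∈ (Rexp I a E).star.matches',
              ∃ w, (∃ q ∈ (Dexp I a E).matches', ∃ r ∈ E.star.matches', q ++ r = w) ∧
                p ++ w = v₀ ++ v₁ by
          obtain ⟨p, hp, w, hw, hpw⟩ := h L v₀ v₁ hflat hL hi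
          exact ⟨p, by simpa [matches'_star] using hp, w, by
            simpa [matches'_star] using hw, hpw⟩
        clear hflat hL hi v₀ v₁ L
        intro L
        induction L with
        | nil => intro v₀ v₁ h; simp at h
        | cons z L ih =>
            intro v₀ v₁ hflat hL hi
            rw [List.flatten_cons] at hflat
            rcases List.append_eq_append_iff.1 hflat.symm with ⟨r, hr1, hr2⟩ | ⟨r, hr1, hr2⟩
            · -- v₀ = z ++ r, L.flatten = r ++ a :: v₁
              obtain ⟨p, hp, w, hw, hpw⟩ := ih r v₁ hr2.symm
                (fun y hy => hL y (List.mem_cons_of_mem _ hy))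
                (fun b hb => hi b (by rw [hr1]; exact List.mem_append.2 (Or.inr hb)))
              refine ⟨z ++ p, ?_, w, hw, by rw [hr1, List.append_assoc, List.append_assoc, hpw]⟩
              rw [matches'_star] at hp ⊢
              obtain ⟨P, rfl, hP⟩ := Language.mem_kstar.1 hp
              apply Language.mem_kstar.2
              refine ⟨z :: P, by simp, ?_⟩
              intro y hy
              rcases List.mem_cons.1 hy with h' | hy
              · rw [h']
                exact (rexp_matches a E _).2 ⟨hL z List.mem_cons_self,
                  fun b hb => hi b (by rw [hr1]; exact List.mem_append.2 (Or.inl hb))⟩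
              · exact hP y hy
            · -- z = v₀ ++ r, a :: v₁ = r ++ L.flatten
              rcases r with _ | ⟨r1, r'⟩
              · rw [List.nil_append] at hr2
                simp only [List.append_nil] at hr1
                obtain ⟨p, hp, w, hw, hpw⟩ := ih [] v₁ hr2
                  (fun y hy => hL y (List.mem_cons_of_mem _ hy)) (by simp)
                refine ⟨v₀ ++ p, ?_, w, hw, by
                  rw [List.append_assoc, hpw, List.nil_append]⟩
                rw [matches'_star] at hp ⊢
                obtain ⟨P, rfl, hP⟩ := Language.mem_kstar.1 hp
                apply Language.mem_kstar.2
                refine ⟨v₀ :: P, by simp, ?_⟩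
                intro y hy
                rcases List.mem_cons.1 hy with h' | hy
                · rw [h']
                  refine (rexp_matches a E _).2 ⟨?_, hi⟩
                  rw [← hr1]; exact hL z List.mem_cons_self
                · exact hP y hy
              · rw [List.cons_append] at hr2
                injection hr2 with h1 h2
                refine ⟨[], by simp [matches'_star, Language.nil_mem_kstar], _,
                  ⟨v₀ ++ r', (ihE _).2 ⟨v₀, r', rfl, by
                      rw [h1, ← hr1]; exact hL z List.mem_cons_self, hi⟩,
                    L.flatten, by
                      rw [matches'_star]
                      exact Language.join_mem_kstar
                        (fun y hy => hL y (List.mem_cons_of_mem _ hy)), rfl⟩,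
                  by rw [h2, List.nil_append, List.append_assoc]⟩

end Semantics
section Step
variable {I : α → α → Prop}

lemma step_letter (hsym : Symmetric I) (a : α) (E : RegularExpression α) (w : List α) :
    (a :: w) ∈ TrClosure I E.matches' ↔ w ∈ TrClosure I (Dexp I a E).matches' := by
  constructor
  · rintro ⟨z, hz, ht⟩
    obtain ⟨z₀, z₁, rfl, hind, ht'⟩ := treq_extract hsym ht a [] w rfl (by simp)
    exact ⟨z₀ ++ z₁,
      (dexp_matches a E _).2 ⟨z₀, z₁, rfl, hz, fun b hb => hsym (hind b hb)⟩, ht'⟩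
  · rintro ⟨v, hv, ht⟩
    obtain ⟨v₀, v₁, rfl, hm, hi⟩ := (dexp_matches a E _).1 hv
    refine ⟨v₀ ++ a :: v₁, hm, ?_⟩
    exact (treq_cons a ht).trans (treq_commute hsym v₁ (fun b hb => hsym (hi b hb)))

lemma step_word (hsym : Symmetric I) (E : RegularExpression α) (u v : List α) :
    u ++ v ∈ TrClosure I E.matches' ↔ v ∈ TrClosure I (DexpW I u E).matches' := by
  induction u generalizing E with
  | nil => exact Iff.rfl
  | cons a u ih =>
      rw [List.cons_append]
      exact (step_letter hsym a E (u ++ v)).trans (ih (Dexp I a E))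

lemma mem_trclosure_nil (L : Set (List α)) :
    ([] : List α) ∈ TrClosure I L ↔ ([] : List α) ∈ L := by
  constructor
  · rintro ⟨z, hz, ht⟩
    rwa [treq_nil ht] at hz
  · intro h; exact ⟨[], h, TrEq.refl _⟩

end Step

/-- u++v ∈ [⟦E⟧] iff v ∈ [⟦D_u E⟧]; in particular u ∈ [⟦E⟧] iff (D_u E)↓. -/
theorem stmt8 {α : Type u} [Fintype α] (I : α → α → Prop)
    (hirr : Irreflexive I) (hsym : Symmetric I) (E : RegularExpression α) (u v : List α) :
    (u ++ v ∈ TrClosure I E.matches' ↔ v ∈ TrClosure I (DexpW I u E).matches') ∧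
    (u ∈ TrClosure I E.matches' ↔ [] ∈ (DexpW I u E).matches') := by
  refine ⟨step_word hsym E u v, ?_⟩
  have h1 := step_word hsym E u []
  rw [List.append_nil] at h1
  rw [h1]; exact mem_trclosure_nil _
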